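/- (Remez inequality) Let p be a real polynomial of degree at most d, let I be a closed bounded interval of the real line, and let E ⊆ I be a Lebesgue measurable set of positive measure |E|. Then max_{x ∈ I} |p(x)| ≤ (4·|I| / |E|)^d · sup_{x ∈ E} |p(x)|, where |I| denotes the length of I. -/

import Mathlib

open MeasureTheory Polynomial Finset Real


lemma lag_basis_eq {n : ℕ} (v : ℕ → ℝ) (j : ℕ) :
    Lagrange.basis (range (n+1)) v j
      = C (∏ i ∈ (range (n+1)).erase j, (v j - v i)⁻¹) *
        Lagrange.nodal ((range (n+1)).erase j) v := by
  rw [Lagrange.basis, Lagrange.nodal, map_prod, ← Finset.prod_mul_distrib]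
  exact Finset.prod_congr rfl fun i _ => rfl

lemma lag_eval {n : ℕ} {v : ℕ → ℝ} (hv : Set.InjOn v (range (n+1)))
    {q : ℝ[X]} (hq : q.natDegree ≤ n) (x : ℝ) :
    q.eval x = ∑ j ∈ range (n+1), q.eval (v j) *
      ∏ i ∈ (range (n+1)).erase j, ((v j - v i)⁻¹ * (x - v i)) := by
  have hdeg : q.degree < (#(range (n+1)) : ℕ) := by
    rw [Finset.card_range]
    exact lt_of_le_of_lt degree_le_natDegree (by exact_mod_cast Nat.lt_succ_of_le hq)
  conv_lhs => rw [Lagrange.eq_interpolate hv hdeg]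
  rw [Lagrange.interpolate_apply, eval_finset_sum]
  refine Finset.sum_congr rfl fun j hj => ?_
  rw [eval_mul, eval_C, Lagrange.basis, eval_prod]
  congr 1
  exact Finset.prod_congr rfl fun i _ => by
    simp [Lagrange.basisDivisor, mul_comm]

lemma lag_coeff {n : ℕ} {v : ℕ → ℝ} (hv : Set.InjOn v (range (n+1)))
    {q : ℝ[X]} (hq : q.natDegree ≤ n) :
    q.coeff n = ∑ j ∈ range (n+1), q.eval (v j) *
      ∏ i ∈ (range (n+1)).erase j, (v j - v i)⁻¹ := by
  have hdeg : q.degree < (#(range (n+1)) : ℕ) := by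
    rw [Finset.card_range]
    exact lt_of_le_of_lt degree_le_natDegree (by exact_mod_cast Nat.lt_succ_of_le hq)
  conv_lhs => rw [Lagrange.eq_interpolate hv hdeg]
  rw [Lagrange.interpolate_apply, finset_sum_coeff]
  refine Finset.sum_congr rfl fun j hj => ?_
  rw [lag_basis_eq, ← mul_assoc, ← C_mul, coeff_C_mul]
  have hcard : #((range (n+1)).erase j) = n := by
    rw [Finset.card_erase_of_mem hj]
    · simp
  have hmonic : (Lagrange.nodal ((range (n+1)).erase j) v).Monic := Lagrange.nodal_monic
  have : (Lagrange.nodal ((range (n+1)).erase j) v).coeff n = 1 := by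
    have := hmonic.coeff_natDegree
    rwa [Lagrange.natDegree_nodal, hcard] at this
  rw [this, mul_one, mul_comm]



lemma T_natDeg_le : ∀ n : ℕ, (Polynomial.Chebyshev.T ℝ n).natDegree ≤ n := by
  intro n
  induction n using Nat.strong_induction_on with
  | _ n ih =>
    match n with
    | 0 => simp [Polynomial.Chebyshev.T_zero]
    | 1 => simp [Polynomial.Chebyshev.T_one]
    | (m+2) =>
      have h2 : ((m:ℤ)+2) = ((m+2 : ℕ) : ℤ) := by push_cast; ring
      have := Polynomial.Chebyshev.T_add_two ℝ (m : ℤ)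
      rw [h2] at this
      rw [this]
      refine le_trans (natDegree_sub_le _ _) ?_
      have hX : (2 * X * Polynomial.Chebyshev.T ℝ ((m:ℤ)+1)).natDegree ≤ m + 2 := by
        refine le_trans (natDegree_mul_le) ?_
        have : ((m:ℤ)+1) = ((m+1 : ℕ) : ℤ) := by push_cast; ring
        rw [this]
        have h1 := ih (m+1) (by omega)
        have h2X : (2 * X : ℝ[X]).natDegree ≤ 1 := by
          refine le_trans (natDegree_mul_le) ?_
          simp
        omega
      have hT : (Polynomial.Chebyshev.T ℝ (m:ℤ)).natDegree ≤ m + 2 :=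
        le_trans (ih m (by omega)) (by omega)
      exact max_le hX hT

lemma T_lead : ∀ n : ℕ, (Polynomial.Chebyshev.T ℝ (n+1 : ℕ)).coeff (n+1) = 2^n := by
  intro n
  induction n with
  | zero => simp [Polynomial.Chebyshev.T_one]
  | succ m ih =>
    have h2 : ((m+2 : ℕ) : ℤ) = ((m:ℤ)+2) := by push_cast; ring
    rw [h2, Polynomial.Chebyshev.T_add_two]
    have hm1 : ((m:ℤ)+1) = ((m+1 : ℕ) : ℤ) := by push_cast; ring
    rw [coeff_sub]
    have hTm : (Polynomial.Chebyshev.T ℝ (m:ℤ)).coeff (m+2) = 0 := by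
      apply coeff_eq_zero_of_natDegree_lt
      exact lt_of_le_of_lt (T_natDeg_le m) (by omega)
    have hX : (2 * X * Polynomial.Chebyshev.T ℝ ((m:ℤ)+1)).coeff (m+2)
        = 2 * (Polynomial.Chebyshev.T ℝ ((m:ℤ)+1)).coeff (m+1) := by
      have : (2 * X * Polynomial.Chebyshev.T ℝ ((m:ℤ)+1))
          = C 2 * (X * Polynomial.Chebyshev.T ℝ ((m:ℤ)+1)) := by
        have h22 : (2 : ℝ[X]) = C 2 := (map_ofNat C 2).symm
        rw [← mul_assoc, h22]
      rw [this, coeff_C_mul, coeff_X_mul]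
    rw [hX, hTm, hm1, ih]
    ring

lemma cheb_eval (d j : ℕ) (hd : 0 < d) :
    (Polynomial.Chebyshev.T ℝ d).eval (Real.cos (j * π / d)) = (-1)^j := by
  rw [Polynomial.Chebyshev.T_real_cos]
  have : ((d:ℤ):ℝ) * (j * π / d) = j * π := by
    push_cast
    field_simp
  rw [this]
  simpa using Real.cos_nat_mul_pi_sub 0 j


lemma c_anti {d : ℕ} (hd : 0 < d) {i j : ℕ} (hij : i < j) (hj : j ≤ d) :
    Real.cos (j * π / d) < Real.cos (i * π / d) := by
  have hπ := Real.pi_pos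
  have hd' : (0:ℝ) < d := by exact_mod_cast hd
  apply Real.cos_lt_cos_of_nonneg_of_le_pi
  · positivity
  · rw [div_le_iff₀ hd']
    have : (j:ℝ) ≤ d := by exact_mod_cast hj
    nlinarith
  · have hij' : (i:ℝ) < j := by exact_mod_cast hij
    have h := mul_lt_mul_of_pos_right (show (i:ℝ)*π < j*π by nlinarith)
      (show (0:ℝ) < (d:ℝ)⁻¹ by positivity)
    simpa [div_eq_mul_inv] using h

lemma c_inj {d : ℕ} (hd : 0 < d) :
    Set.InjOn (fun j : ℕ => Real.cos (j * π / d)) (range (d+1)) := by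
  intro a ha b hb hab
  simp only [Finset.coe_range, Set.mem_Iio] at ha hb
  have hab' : Real.cos (a * π / d) = Real.cos (b * π / d) := hab
  by_contra hne
  rcases Nat.lt_or_ge a b with h | h
  · exact absurd hab' (ne_of_gt (c_anti hd h (by omega)))
  · have h' : b < a := by omega
    exact absurd hab' (ne_of_lt (c_anti hd h' (by omega)))

lemma sign_prod {d : ℕ} (hd : 0 < d) {j : ℕ} (hj : j ≤ d) :
    ∏ i ∈ (range (d+1)).erase j, (Real.cos (j * π / d) - Real.cos (i * π / d))
      = (-1)^j * ∏ i ∈ (range (d+1)).erase j,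
          |Real.cos (j * π / d) - Real.cos (i * π / d)| := by
  set c : ℕ → ℝ := fun i => Real.cos (i * π / d) with hc
  set s := (range (d+1)).erase j with hs
  have hfilt : s.filter (· < j) = range j := by
    ext i
    simp only [hs, Finset.mem_filter, Finset.mem_erase, Finset.mem_range]
    omega
  have h1 : ∀ i ∈ s.filter (· < j), c j - c i = -|c j - c i| := by
    intro i hi
    rw [hfilt, Finset.mem_range] at hi
    have : c j < c i := c_anti hd hi hj
    rw [abs_of_neg (by linarith)]; ring
  have h2 : ∀ i ∈ s.filter (¬ · < j), c j - c i = |c j - c i| := by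
    intro i hi
    simp only [hs, Finset.mem_filter, Finset.mem_erase, Finset.mem_range] at hi
    have hji : j < i := by omega
    have : c i < c j := c_anti hd hji (by omega)
    rw [abs_of_pos (by linarith)]
  calc ∏ i ∈ s, (c j - c i)
      = (∏ i ∈ s.filter (· < j), (c j - c i)) * ∏ i ∈ s.filter (¬ · < j), (c j - c i) :=
        (Finset.prod_filter_mul_prod_filter_not s _ _).symm
    _ = ((-1)^j * ∏ i ∈ s.filter (· < j), |c j - c i|) * ∏ i ∈ s.filter (¬ · < j), |c j - c i| := by
        rw [Finset.prod_congr rfl h1, Finset.prod_congr rfl h2]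
        have : ∀ i ∈ s.filter (· < j), -|c j - c i| = (-1) * |c j - c i| := by
          intro i _; ring
        rw [Finset.prod_congr rfl this, Finset.prod_mul_distrib, Finset.prod_const,
          hfilt, Finset.card_range]
    _ = (-1)^j * ∏ i ∈ s, |c j - c i| := by
        rw [mul_assoc, Finset.prod_filter_mul_prod_filter_not s _ _]

lemma chebsum {d : ℕ} (hd : 0 < d) :
    ∑ j ∈ range (d+1), ∏ i ∈ (range (d+1)).erase j,
        |Real.cos (j * π / d) - Real.cos (i * π / d)|⁻¹ = 2^(d-1) := by
  set c : ℕ → ℝ := fun i => Real.cos (i * π / d) with hc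
  have hcoeff := lag_coeff (n := d) (v := c) (c_inj hd) (q := Polynomial.Chebyshev.T ℝ d)
      (T_natDeg_le d)
  have hl : (Polynomial.Chebyshev.T ℝ d).coeff d = 2^(d-1) := by
    obtain ⟨m, rfl⟩ : ∃ m, d = m + 1 := ⟨d - 1, by omega⟩
    simpa using T_lead m
  have key : (2:ℝ)^(d-1) = ∑ j ∈ range (d+1),
      (Polynomial.Chebyshev.T ℝ d).eval (c j) * ∏ i ∈ (range (d+1)).erase j, (c j - c i)⁻¹ := by
    rw [← hcoeff, hl]
  have hterm : ∀ j ∈ range (d+1),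
      (Polynomial.Chebyshev.T ℝ d).eval (c j) * ∏ i ∈ (range (d+1)).erase j, (c j - c i)⁻¹
        = ∏ i ∈ (range (d+1)).erase j, |c j - c i|⁻¹ := by
    intro j hj
    have hj' : j ≤ d := by simpa using Nat.lt_succ_iff.mp (Finset.mem_range.mp hj)
    rw [cheb_eval d j hd, Finset.prod_inv_distrib, sign_prod hd hj', mul_inv,
      Finset.prod_inv_distrib]
    rw [← mul_assoc]
    have : ((-1:ℝ)^j) * ((-1:ℝ)^j)⁻¹ = 1 := by
      apply mul_inv_cancel₀
      positivity
    rw [this, one_mul]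
  rw [Finset.sum_congr rfl hterm] at key
  exact key.symm


lemma exists_node {E : Set ℝ} {A B : ℝ} (hE : MeasurableSet E) (hAB : A ≤ B)
    (hEI : E ⊆ Set.Icc A B) (hpos : 0 < volume E) (τ : ℝ) (hτ0 : 0 ≤ τ)
    (hτm : τ ≤ (volume E).toReal) :
    ∃ y ∈ Set.Icc A B, y ∈ closure E ∧ (volume (E ∩ Set.Iic y)).toReal = τ := by
  set m := (volume E).toReal with hm
  have hEfin : volume E ≠ ⊤ := by
    refine ne_top_of_le_ne_top ?_ (measure_mono hEI)
    rw [Real.volume_Icc]; exact ENNReal.ofReal_ne_top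
  have hmpos : 0 < m := ENNReal.toReal_pos hpos.ne' hEfin
  set h : ℝ → ℝ := fun t => (volume (E ∩ Set.Iic t)).toReal with hh
  have hfin : ∀ t, volume (E ∩ Set.Iic t) ≠ ⊤ :=
    fun t => ne_top_of_le_ne_top hEfin (measure_mono Set.inter_subset_left)
  have hmono : Monotone h := by
    intro s t hst
    exact ENNReal.toReal_mono (hfin t)
      (measure_mono (Set.inter_subset_inter_right _ (Set.Iic_subset_Iic.mpr hst)))
  have hnn : ∀ t, 0 ≤ h t := fun t => ENNReal.toReal_nonneg
  have hdiff : ∀ s t, s ≤ t → (volume (E ∩ Set.Ioc s t)).toReal = h t - h s := by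
    intro s t hst
    have hsplit : E ∩ Set.Iic t = (E ∩ Set.Iic s) ∪ (E ∩ Set.Ioc s t) := by
      rw [← Set.inter_union_distrib_left, Set.Iic_union_Ioc_eq_Iic hst]
    have hdisj : Disjoint (E ∩ Set.Iic s) (E ∩ Set.Ioc s t) := by
      refine Disjoint.mono Set.inter_subset_right Set.inter_subset_right ?_
      exact Set.Iic_disjoint_Ioc le_rfl
    have := measure_union (μ := volume) hdisj (hE.inter measurableSet_Ioc)
    rw [← hsplit] at this
    have hfs := hfin s
    have hft : volume (E ∩ Set.Ioc s t) ≠ ⊤ :=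
      ne_top_of_le_ne_top hEfin (measure_mono Set.inter_subset_left)
    rw [hh]
    simp only []
    rw [this, ENNReal.toReal_add hfs hft]
    ring
  have hlip : ∀ s t, s ≤ t → h t - h s ≤ t - s := by
    intro s t hst
    rw [← hdiff s t hst]
    have h1 : volume (E ∩ Set.Ioc s t) ≤ volume (Set.Ioc s t) :=
      measure_mono Set.inter_subset_right
    have h2 : (volume (Set.Ioc s t)).toReal = t - s := by
      rw [Real.volume_Ioc, ENNReal.toReal_ofReal (by linarith)]
    rw [← h2]
    exact ENNReal.toReal_mono (by rw [Real.volume_Ioc]; exact ENNReal.ofReal_ne_top) h1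
  have hcont : Continuous h := by
    refine LipschitzWith.continuous (K := 1) (LipschitzWith.of_dist_le_mul ?_)
    intro a b
    rw [Real.dist_eq, Real.dist_eq, NNReal.coe_one, one_mul]
    rcases le_total a b with hab | hab
    · rw [abs_of_nonpos (by linarith [hmono hab] : h a - h b ≤ 0)]
      have := hlip a b hab
      rw [abs_of_nonpos (by linarith : a - b ≤ 0)]
      linarith
    · rw [abs_of_nonneg (by linarith [hmono hab] : 0 ≤ h a - h b)]
      have := hlip b a hab
      rw [abs_of_nonneg (by linarith : 0 ≤ a - b)]
      linarith
  have hA0 : h A = 0 := by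
    have : E ∩ Set.Iic A ⊆ {A} := by
      intro z ⟨hzE, hz⟩
      have := (hEI hzE).1
      simp only [Set.mem_Iic] at hz
      simp [le_antisymm hz this]
    have h0 : volume (E ∩ Set.Iic A) ≤ volume ({A} : Set ℝ) := measure_mono this
    simp only [Real.volume_singleton, nonpos_iff_eq_zero] at h0
    rw [hh]; simp [h0]
  have hBm : h B = m := by
    have heq : E ∩ Set.Iic B = E :=
      Set.inter_eq_left.mpr (fun z hz => Set.mem_Iic.mpr (hEI hz).2)
    rw [hh]; simp only []; rw [heq]
  rcases eq_or_lt_of_le hτ0 with hτz | hτpos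
  · -- τ = 0 : use sSup
    set S : Set ℝ := Set.Icc A B ∩ {t | h t ≤ 0} with hS
    have hSne : A ∈ S := ⟨Set.left_mem_Icc.mpr hAB, by simp [hA0]⟩
    have hSbd : BddAbove S := ⟨B, fun t ht => ht.1.2⟩
    have hScl : IsClosed S := isClosed_Icc.inter (isClosed_le hcont continuous_const)
    set y := sSup S with hy
    have hyS : y ∈ S := hScl.csSup_mem ⟨A, hSne⟩ hSbd
    have hy0 : h y = 0 := le_antisymm hyS.2 (hnn y)
    refine ⟨y, hyS.1, ?_, by rw [← hτz]; exact hy0⟩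
    rw [Metric.mem_closure_iff]
    intro ε hε
    set u := y + ε/2 with hu
    have hupos : 0 < h u := by
      rcases le_or_gt u B with huB | huB
      · have huIcc : u ∈ Set.Icc A B := ⟨by simp only [hu]; linarith [hyS.1.1], huB⟩
        by_contra hcon
        push_neg at hcon
        have huS : u ∈ S := ⟨huIcc, by simpa using hcon⟩
        have := le_csSup hSbd huS
        simp only [hu] at this
        linarith
      · calc (0:ℝ) < m := hmpos
          _ = h B := hBm.symm
          _ ≤ h u := hmono huB.le
    have hvol : volume (E ∩ Set.Ioc y u) ≠ 0 := by
      intro hcon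
      have : (volume (E ∩ Set.Ioc y u)).toReal = 0 := by rw [hcon]; simp
      rw [hdiff y u (by simp [hu]; linarith)] at this
      rw [hy0] at this
      linarith
    obtain ⟨z, hzE, hzI⟩ := nonempty_of_measure_ne_zero hvol
    refine ⟨z, hzE, ?_⟩
    rw [Real.dist_eq]
    have : y < z ∧ z ≤ u := hzI
    rw [abs_of_nonpos (by linarith)]
    simp only [hu] at this
    linarith
  · -- τ > 0 : use sInf
    set S : Set ℝ := Set.Icc A B ∩ {t | τ ≤ h t} with hS
    have hSne : B ∈ S := ⟨Set.right_mem_Icc.mpr hAB, by rw [Set.mem_setOf_eq, hBm]; exact hτm⟩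
    have hSbd : BddBelow S := ⟨A, fun t ht => ht.1.1⟩
    have hScl : IsClosed S := isClosed_Icc.inter (isClosed_le continuous_const hcont)
    set y := sInf S with hy
    have hyS : y ∈ S := hScl.csInf_mem ⟨B, hSne⟩ hSbd
    have hyτ : h y = τ := by
      refine le_antisymm ?_ hyS.2
      have hτIcc : τ ∈ Set.Icc (h A) (h B) := by
        rw [hA0, hBm]; exact ⟨hτ0, hτm⟩
      obtain ⟨t0, ht0I, ht0⟩ := intermediate_value_Icc hAB hcont.continuousOn hτIcc
      have ht0S : t0 ∈ S := ⟨ht0I, by rw [Set.mem_setOf_eq, ht0]⟩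
      have : y ≤ t0 := csInf_le hSbd ht0S
      calc h y ≤ h t0 := hmono this
        _ = τ := ht0
    refine ⟨y, hyS.1, ?_, hyτ⟩
    rw [Metric.mem_closure_iff]
    intro ε hε
    set u := y - ε/2 with hu
    have huτ : h u < τ := by
      rcases lt_or_ge u A with huA | huA
      · calc h u ≤ h A := hmono huA.le
          _ = 0 := hA0
          _ < τ := hτpos
      · have huIcc : u ∈ Set.Icc A B := ⟨huA, by simp only [hu]; linarith [hyS.1.2]⟩
        by_contra hcon
        push_neg at hcon
        have huS : u ∈ S := ⟨huIcc, hcon⟩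
        have := csInf_le hSbd huS
        simp only [hu] at this
        linarith
    have hvol : volume (E ∩ Set.Ioc u y) ≠ 0 := by
      intro hcon
      have h0 : (volume (E ∩ Set.Ioc u y)).toReal = 0 := by rw [hcon]; simp
      rw [hdiff u y (by simp [hu]; linarith)] at h0
      rw [hyτ] at h0
      linarith
    obtain ⟨z, hzE, hzI⟩ := nonempty_of_measure_ne_zero hvol
    refine ⟨z, hzE, ?_⟩
    rw [Real.dist_eq]
    have : u < z ∧ z ≤ y := hzI
    rw [abs_of_nonneg (by linarith)]
    simp only [hu] at this
    linarith


lemma cdf_lip {E : Set ℝ} (hEfin : volume E ≠ ⊤) {s t : ℝ} (hst : s ≤ t) :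
    (volume (E ∩ Set.Iic t)).toReal - (volume (E ∩ Set.Iic s)).toReal ≤ t - s := by
  have hsub : E ∩ Set.Iic t ⊆ (E ∩ Set.Iic s) ∪ Set.Ioc s t := by
    intro z ⟨hzE, hz⟩
    rcases le_or_gt z s with h | h
    · exact Or.inl ⟨hzE, h⟩
    · exact Or.inr ⟨h, hz⟩
  have h1 : volume (E ∩ Set.Iic t) ≤ volume (E ∩ Set.Iic s) + volume (Set.Ioc s t) :=
    le_trans (measure_mono hsub) (measure_union_le _ _)
  have hf1 : volume (E ∩ Set.Iic s) ≠ ⊤ :=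
    ne_top_of_le_ne_top hEfin (measure_mono Set.inter_subset_left)
  have hf2 : volume (Set.Ioc s t) ≠ ⊤ := by rw [Real.volume_Ioc]; exact ENNReal.ofReal_ne_top
  have := ENNReal.toReal_mono (by exact ENNReal.add_ne_top.mpr ⟨hf1, hf2⟩) h1
  rw [ENNReal.toReal_add hf1 hf2, Real.volume_Ioc, ENNReal.toReal_ofReal (by linarith)] at this
  linarith

lemma cdf_mono {E : Set ℝ} (hEfin : volume E ≠ ⊤) {s t : ℝ} (hst : s ≤ t) :
    (volume (E ∩ Set.Iic s)).toReal ≤ (volume (E ∩ Set.Iic t)).toReal :=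
  ENNReal.toReal_mono (ne_top_of_le_ne_top hEfin (measure_mono Set.inter_subset_left))
    (measure_mono (Set.inter_subset_inter_right _ (Set.Iic_subset_Iic.mpr hst)))

/-- Remez inequality: if a real polynomial of degree at most `d` is controlled on a
measurable subset `E ⊆ I = [A,B]` of positive measure, then
`max_I |p| ≤ (4|I|/|E|)^d · sup_E |p|`. -/
theorem remez_inequality (d : ℕ) (p : Polynomial ℝ) (hdeg : p.natDegree ≤ d)
    (A B : ℝ) (hAB : A ≤ B) (E : Set ℝ) (hE : MeasurableSet E) (hEI : E ⊆ Set.Icc A B)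
    (hpos : 0 < volume E) :
    ∀ x ∈ Set.Icc A B,
      |p.eval x| ≤ (4 * (B - A) / (volume E).toReal) ^ d *
        sSup ((fun y => |p.eval y|) '' E) := by
  intro x hx
  have hEfin : volume E ≠ ⊤ := by
    refine ne_top_of_le_ne_top ?_ (measure_mono hEI)
    rw [Real.volume_Icc]; exact ENNReal.ofReal_ne_top
  set m := (volume E).toReal with hm
  have hmpos : 0 < m := ENNReal.toReal_pos hpos.ne' hEfin
  have hmL : m ≤ B - A := by
    have h1 := ENNReal.toReal_mono (by rw [Real.volume_Icc]; exact ENNReal.ofReal_ne_top)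
      (measure_mono hEI)
    rwa [Real.volume_Icc, ENNReal.toReal_ofReal (by linarith)] at h1
  have hL : 0 < B - A := lt_of_lt_of_le hmpos hmL
  have hEne : E.Nonempty := nonempty_of_measure_ne_zero hpos.ne'
  set M := sSup ((fun y => |p.eval y|) '' E) with hM
  have hbdd : BddAbove ((fun y => |p.eval y|) '' E) := by
    have hcont : Continuous fun y : ℝ => |p.eval y| := (Polynomial.continuous p).abs
    exact ((isCompact_Icc.image hcont).bddAbove).mono (Set.image_mono hEI)
  have hMle : ∀ z ∈ E, |p.eval z| ≤ M := fun z hz => le_csSup hbdd ⟨z, hz, rfl⟩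
  have hM0 : 0 ≤ M := le_trans (abs_nonneg _) (hMle hEne.choose hEne.choose_spec)
  have hMcl : ∀ z ∈ closure E, |p.eval z| ≤ M := by
    have hsub : closure E ⊆ {z | |p.eval z| ≤ M} :=
      closure_minimal hMle (isClosed_le (Polynomial.continuous p).abs continuous_const)
    exact fun z hz => hsub hz
  rcases Nat.eq_zero_or_pos d with hd0 | hd
  · subst hd0
    have hp : p = C (p.coeff 0) := eq_C_of_natDegree_le_zero hdeg
    obtain ⟨e, he⟩ := hEne
    have h1 : |p.eval x| = |p.eval e| := by rw [hp]; simp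
    rw [pow_zero, one_mul, h1]
    exact hMle e he
  · set c : ℕ → ℝ := fun j => Real.cos (j * π / d) with hc
    set τ : ℕ → ℝ := fun j => m/2 * (1 - c j) with hτ
    have hτmono : ∀ i j : ℕ, i < j → j ≤ d → τ i < τ j := by
      intro i j hij hj
      have := c_anti hd hij hj
      simp only [hτ, hc]
      nlinarith
    have hτ0 : ∀ j : ℕ, 0 ≤ τ j := by
      intro j
      have := Real.cos_le_one ((j:ℝ) * π / d)
      simp only [hτ, hc]
      nlinarith
    have hτle : ∀ j : ℕ, τ j ≤ m := by
      intro j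
      have := Real.neg_one_le_cos ((j:ℝ) * π / d)
      simp only [hτ, hc]
      nlinarith
    have hex : ∀ j : ℕ, ∃ y, j ≤ d →
        y ∈ Set.Icc A B ∧ y ∈ closure E ∧ (volume (E ∩ Set.Iic y)).toReal = τ j := by
      intro j
      obtain ⟨y, h1, h2, h3⟩ := exists_node hE hAB hEI hpos (τ j) (hτ0 j) (hτle j)
      exact ⟨y, fun _ => ⟨h1, h2, h3⟩⟩
    choose y hy using hex
    have hsep : ∀ i j : ℕ, i < j → j ≤ d → τ j - τ i ≤ y j - y i := by
      intro i j hij hj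
      obtain ⟨_, _, hvi⟩ := hy i (le_trans (le_of_lt hij) hj)
      obtain ⟨_, _, hvj⟩ := hy j hj
      have hlt : y i < y j := by
        by_contra hcon
        push_neg at hcon
        have := cdf_mono hEfin hcon
        rw [hvi, hvj] at this
        exact absurd this (not_le.mpr (hτmono i j hij hj))
      have := cdf_lip hEfin hlt.le
      rw [hvi, hvj] at this
      linarith
    have hylt : ∀ i j : ℕ, i < j → j ≤ d → y i < y j := by
      intro i j hij hj
      have := hsep i j hij hj
      have := hτmono i j hij hj
      linarith
    have hinj : Set.InjOn y (range (d+1)) := by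
      intro a ha b hb hab
      simp only [Finset.coe_range, Set.mem_Iio] at ha hb
      by_contra hne
      rcases Nat.lt_or_ge a b with hlt | hge
      · exact absurd hab (ne_of_lt (hylt a b hlt (by omega)))
      · exact absurd hab.symm (ne_of_lt (hylt b a (by omega) (by omega)))
    -- the key lower bound on node separation
    have hnodesep : ∀ i j : ℕ, i ≤ d → j ≤ d → i ≠ j →
        m/2 * |c j - c i| ≤ |y j - y i| := by
      intro i j hi hj hne
      rcases Nat.lt_or_ge i j with hlt | hge
      · have h1 := hsep i j hlt hj
        have h2 := c_anti hd hlt hj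
        have h3 : τ j - τ i = m/2 * (c i - c j) := by simp only [hτ]; ring
        rw [abs_of_neg (by simp only [hc]; linarith : c j - c i < 0)]
        rw [abs_of_pos (by linarith [hylt i j hlt hj] : (0:ℝ) < y j - y i)]
        simp only [hc] at h3 ⊢
        linarith
      · have hlt : j < i := by omega
        have h1 := hsep j i hlt hi
        have h2 := c_anti hd hlt hi
        have h3 : τ i - τ j = m/2 * (c j - c i) := by simp only [hτ]; ring
        rw [abs_of_pos (by simp only [hc]; linarith : (0:ℝ) < c j - c i)]
        rw [abs_of_neg (by linarith [hylt j i hlt hi] : y j - y i < 0)]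
        simp only [hc] at h3 ⊢
        linarith
    have hcne : ∀ i j : ℕ, i ≤ d → j ≤ d → i ≠ j → 0 < |c j - c i| := by
      intro i j hi hj hne
      rcases Nat.lt_or_ge i j with hlt | hge
      · have := c_anti hd hlt hj; simp only [hc]; rw [abs_pos]; exact sub_ne_zero.mpr (ne_of_lt this)
      · have := c_anti hd (by omega : j < i) hi; simp only [hc]; rw [abs_pos]
        exact sub_ne_zero.mpr (ne_of_gt this)
    -- Lagrange bound
    have hint := lag_eval hinj hdeg x
    have hbound : |p.eval x| ≤ ∑ j ∈ range (d+1), M *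
        ((2*(B-A)/m)^d * ∏ i ∈ (range (d+1)).erase j, |c j - c i|⁻¹) := by
      rw [hint]
      refine le_trans (Finset.abs_sum_le_sum_abs _ _) ?_
      refine Finset.sum_le_sum ?_
      intro j hj
      have hjd : j ≤ d := Nat.lt_succ_iff.mp (Finset.mem_range.mp hj)
      rw [abs_mul]
      refine mul_le_mul (hMcl _ (hy j hjd).2.1) ?_ (abs_nonneg _) hM0
      rw [Finset.abs_prod]
      have hcard : #((range (d+1)).erase j) = d := by
        rw [Finset.card_erase_of_mem hj, Finset.card_range]
        omega
      calc ∏ i ∈ (range (d+1)).erase j, |(y j - y i)⁻¹ * (x - y i)|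
          ≤ ∏ i ∈ (range (d+1)).erase j, ((2*(B-A)/m) * |c j - c i|⁻¹) := by
            refine Finset.prod_le_prod (fun i _ => abs_nonneg _) ?_
            intro i hi
            obtain ⟨hine, hirange⟩ := Finset.mem_erase.mp hi
            have hid : i ≤ d := Nat.lt_succ_iff.mp (Finset.mem_range.mp hirange)
            have hyi := (hy i hid).1
            have hxb : |x - y i| ≤ B - A := by
              rw [abs_le]
              constructor
              · linarith [hx.1, hyi.2]
              · linarith [hx.2, hyi.1]
            have hsep' : m/2 * |c j - c i| ≤ |y j - y i| :=
              hnodesep i j hid hjd hine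
            have habs : 0 < |c j - c i| := hcne i j hid hjd hine
            have hden : (0:ℝ) < m/2 * |c j - c i| := by positivity
            have hypos : 0 < |y j - y i| := lt_of_lt_of_le hden hsep'
            rw [abs_mul, abs_inv]
            have hinv : |y j - y i|⁻¹ ≤ (m/2 * |c j - c i|)⁻¹ :=
              inv_anti₀ hden hsep'
            have hmain : |y j - y i|⁻¹ * |x - y i| ≤ (m/2 * |c j - c i|)⁻¹ * (B - A) :=
              mul_le_mul hinv hxb (abs_nonneg _) (by positivity)
            refine le_trans hmain (le_of_eq ?_)
            field_simp
        _ = (2*(B-A)/m)^d * ∏ i ∈ (range (d+1)).erase j, |c j - c i|⁻¹ := by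
            rw [Finset.prod_mul_distrib, Finset.prod_const, hcard]
    have hsum : ∑ j ∈ range (d+1), M *
        ((2*(B-A)/m)^d * ∏ i ∈ (range (d+1)).erase j, |c j - c i|⁻¹)
        = M * (2*(B-A)/m)^d * 2^(d-1) := by
      simp_rw [← mul_assoc]
      rw [← Finset.mul_sum]
      have hcs := chebsum hd
      simp only [hc]
      rw [hcs]
    have hfinal : M * (2*(B-A)/m)^d * 2^(d-1) ≤ (4*(B-A)/m)^d * M := by
      have h1 : (2*(B-A)/m)^d * 2^(d-1) ≤ (4*(B-A)/m)^d := by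
        calc (2*(B-A)/m)^d * 2^(d-1) ≤ (2*(B-A)/m)^d * 2^d := by
              refine mul_le_mul_of_nonneg_left ?_ (by positivity)
              exact pow_le_pow_right₀ (by norm_num) (Nat.sub_le d 1)
          _ = (4*(B-A)/m)^d := by
              rw [← mul_pow]
              congr 1
              field_simp
              ring
      calc M * (2*(B-A)/m)^d * 2^(d-1) = ((2*(B-A)/m)^d * 2^(d-1)) * M := by ring
        _ ≤ (4*(B-A)/m)^d * M := mul_le_mul_of_nonneg_right h1 hM0
    calc |p.eval x| ≤ _ := hbound
      _ = M * (2*(B-A)/m)^d * 2^(d-1) := hsum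
      _ ≤ (4*(B-A)/m)^d * M := hfinal
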